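/- Let q be a prime power, k ≥ 1, f : F_q^k → S any function, and t_d ≤ t_f natural numbers. Let u_1, …, u_{q^k} be an enumeration of all vectors of F_q^k. Then the optimal redundancy satisfies r_f(k, t_d, t_f) = N(D_f(t_d, t_f : u_1, …, u_{q^k})). -/
import Mathlib


lemma dist_split {F : Type*} [DecidableEq F] {k r : ℕ} (x y : Fin (k + r) → F) :
    hammingDist x y = hammingDist (x ∘ Fin.castAdd r) (y ∘ Fin.castAdd r)
      + hammingDist (x ∘ Fin.natAdd k) (y ∘ Fin.natAdd k) := by
  simp only [hammingDist, Finset.card_filter]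
  rw [Fin.sum_univ_add]
  rfl

/-- The distance requirement matrix `D_f(t_d, t_f : u_1, …, u_M)`. -/
def DRM {F S : Type*} [Fintype F] [DecidableEq F] [DecidableEq S] {k M : ℕ}
    (f : (Fin k → F) → S) (td tf : ℕ) (u : Fin M → Fin k → F) :
    Fin M → Fin M → ℕ := fun i j =>
  if u i ≠ u j ∧ f (u i) = f (u j) then 2 * td + 1 - hammingDist (u i) (u j)
  else if f (u i) ≠ f (u j) then 2 * tf + 1 - hammingDist (u i) (u j)
  else 0

/-- `N(D)`: the least length `r` for which a `D`-code of length `r` over `F` exists. -/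
noncomputable def Nmat (F : Type*) [Fintype F] [DecidableEq F] {M : ℕ}
    (D : Fin M → Fin M → ℕ) : ℕ :=
  sInf {r : ℕ | ∃ p : Fin M → Fin r → F, ∀ i j, D i j ≤ hammingDist (p i) (p j)}

/-- An `(f : d_d, d_f)`-FCC: a systematic encoding with minimum distance `d_d` overall and
`d_f` between codewords with distinct function values. -/
def IsFCC {F S : Type*} [Fintype F] [DecidableEq F] {k r : ℕ}
    (f : (Fin k → F) → S) (dd df : ℕ)
    (c : (Fin k → F) → (Fin (k + r) → F)) : Prop :=
  (∀ u i, c u (Fin.castAdd r i) = u i) ∧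
  (∀ u v, u ≠ v → dd ≤ hammingDist (c u) (c v)) ∧
  (∀ u v, f u ≠ f v → df ≤ hammingDist (c u) (c v))

/-- The optimal redundancy `r_f(k : d_d, d_f)`. -/
noncomputable def optRedundancy {F S : Type*} [Fintype F] [DecidableEq F] {k : ℕ}
    (f : (Fin k → F) → S) (dd df : ℕ) : ℕ :=
  sInf {r : ℕ | ∃ c : (Fin k → F) → (Fin (k + r) → F), IsFCC f dd df c}

/-- For any function `f : F_q^k → S` and `t_d ≤ t_f`, if `u` enumerates all
vectors of `F_q^k`, then `r_f(k, t_d, t_f) = N(D_f(t_d, t_f : u_1, …, u_{q^k}))`. -/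
theorem optRedundancy_eq_Nmat_DRM
    {F S : Type*} [Field F] [Fintype F] [DecidableEq F] [DecidableEq S]
    {k : ℕ} (hk : 1 ≤ k) (f : (Fin k → F) → S) (td tf : ℕ) (htdtf : td ≤ tf)
    (u : Fin (Fintype.card F ^ k) → (Fin k → F)) (hu : Function.Bijective u) :
    optRedundancy f (2 * td + 1) (2 * tf + 1) = Nmat F (DRM f td tf u) := by
  have hsets : {r : ℕ | ∃ c : (Fin k → F) → (Fin (k + r) → F),
        IsFCC f (2 * td + 1) (2 * tf + 1) c}
      = {r : ℕ | ∃ p : Fin _ → Fin r → F,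
        ∀ i j, DRM f td tf u i j ≤ hammingDist (p i) (p j)} := by
    ext r
    constructor
    · rintro ⟨c, hsys, hdd, hdf⟩
      refine ⟨fun i => c (u i) ∘ Fin.natAdd k, fun i j => ?_⟩
      have hsplit := dist_split (c (u i)) (c (u j))
      have h1 : c (u i) ∘ Fin.castAdd r = u i := funext fun t => hsys (u i) t
      have h2 : c (u j) ∘ Fin.castAdd r = u j := funext fun t => hsys (u j) t
      rw [h1, h2] at hsplit
      unfold DRM
      dsimp only
      split_ifs with ha hb
      · have := hdd (u i) (u j) ha.1
        omega
      · have := hdf (u i) (u j) hb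
        omega
      · exact Nat.zero_le _
    · rintro ⟨p, hp⟩
      set e := Equiv.ofBijective u hu with he
      have hue : ∀ v, u (e.symm v) = v := fun v => e.apply_symm_apply v
      refine ⟨fun v => Fin.append v (p (e.symm v)), fun v i => Fin.append_left _ _ _,
        ?_, ?_⟩
      · intro v w hvw
        have hsplit := dist_split (Fin.append v (p (e.symm v))) (Fin.append w (p (e.symm w)))
        have hc1 : (Fin.append v (p (e.symm v))) ∘ Fin.castAdd r = v :=
          funext fun t => Fin.append_left _ _ _
        have hc2 : (Fin.append w (p (e.symm w))) ∘ Fin.castAdd r = w :=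
          funext fun t => Fin.append_left _ _ _
        have hn1 : (Fin.append v (p (e.symm v))) ∘ Fin.natAdd k = p (e.symm v) :=
          funext fun t => Fin.append_right _ _ _
        have hn2 : (Fin.append w (p (e.symm w))) ∘ Fin.natAdd k = p (e.symm w) :=
          funext fun t => Fin.append_right _ _ _
        rw [hc1, hc2, hn1, hn2] at hsplit
        have hD := hp (e.symm v) (e.symm w)
        unfold DRM at hD
        rw [hue, hue] at hD
        rw [hsplit]
        split_ifs at hD with ha hb
        · omega
        · omega
        · push_neg at ha
          exact absurd (ha hvw) hb
      · intro v w hvw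
        have hne : v ≠ w := fun h => hvw (by rw [h])
        have hsplit := dist_split (Fin.append v (p (e.symm v))) (Fin.append w (p (e.symm w)))
        have hc1 : (Fin.append v (p (e.symm v))) ∘ Fin.castAdd r = v :=
          funext fun t => Fin.append_left _ _ _
        have hc2 : (Fin.append w (p (e.symm w))) ∘ Fin.castAdd r = w :=
          funext fun t => Fin.append_left _ _ _
        have hn1 : (Fin.append v (p (e.symm v))) ∘ Fin.natAdd k = p (e.symm v) :=
          funext fun t => Fin.append_right _ _ _
        have hn2 : (Fin.append w (p (e.symm w))) ∘ Fin.natAdd k = p (e.symm w) :=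
          funext fun t => Fin.append_right _ _ _
        rw [hc1, hc2, hn1, hn2] at hsplit
        have hD := hp (e.symm v) (e.symm w)
        unfold DRM at hD
        rw [hue, hue] at hD
        rw [hsplit]
        rw [if_neg (fun h => hvw h.2), if_pos hvw] at hD
        omega
  unfold optRedundancy Nmat
  rw [hsets]
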